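/- For real η ≥ 1 and integer i ≥ 2, define f_η(i) = (2^{i-1}(η + i - 2) - η + 1)/(2^i (i-1)). Then f_η(i) ≥ f_η(i+1) for all i ≥ 2. Consequently, for any integer k ≥ 2, the minimum of f_η(i) over 2 ≤ i ≤ k equals f_η(k). -/

import Mathlib

theorem stmt_5 (η : ℝ) (hη : 1 ≤ η) (f : ℕ → ℝ)
    (hf : ∀ i, f i = ((2 : ℝ) ^ (i - 1) * (η + (i : ℝ) - 2) - η + 1) / (2 ^ i * ((i : ℝ) - 1))) :
    (∀ i, 2 ≤ i → f (i + 1) ≤ f i) ∧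
      (∀ k, 2 ≤ k → ∀ i, 2 ≤ i → i ≤ k → f k ≤ f i) := by
  have step : ∀ i, 2 ≤ i → f (i + 1) ≤ f i := by
    intro i hi
    have h2 : (2:ℝ) ≤ (i:ℝ) := by exact_mod_cast hi
    rw [hf, hf]
    have hpow : ((i:ℝ)) ≤ 2 ^ (i-1) := by
      have h1 : i - 1 < 2 ^ (i-1) := Nat.lt_two_pow_self
      have h2 : i ≤ 2 ^ (i-1) := by omega
      exact_mod_cast h2
    have e1 : (i + 1) - 1 = i := rfl
    have e2 : ((i + 1 : ℕ) : ℝ) = (i : ℝ) + 1 := by push_cast; ring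
    have e3 : (2:ℝ) ^ i = 2 * 2 ^ (i-1) := by
      rw [← pow_succ']
      congr 1
      omega
    have e4 : (2:ℝ) ^ (i+1) = 4 * 2 ^ (i-1) := by
      rw [pow_succ, e3]; ring
    rw [e1, e2, e3, e4]
    have hp : (0:ℝ) < 2 ^ (i-1) := by positivity
    rw [div_le_div_iff₀ (by nlinarith) (by nlinarith)]
    nlinarith [mul_nonneg (sub_nonneg.2 hη) (by nlinarith : (0:ℝ) ≤ 2 * 2^(i-1) - (i:ℝ) - 1),
      mul_pos hp (by linarith : (0:ℝ) < (i:ℝ) - 1)]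
  refine ⟨step, ?_⟩
  intro k hk
  induction k with
  | zero => omega
  | succ n ih =>
    intro i hi hik
    rcases Nat.lt_or_ge i (n+1) with h | h
    · have hn : 2 ≤ n := by omega
      exact le_trans (step n hn) (ih hn i hi (by omega))
    · have : i = n + 1 := by omega
      subst this; rfl
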